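/- Let s, t be two states in a finite-state pLTS and m_max the greatest state-metric. Then s ∼ t if and only if m_max(s,t) = 0. -/

import Mathlib

open scoped Classical

/-- A (discrete) probability distribution over a finite set `S`. -/
structure FDist (S : Type*) [Fintype S] where
  f : S → ℝ
  nonneg : ∀ s, 0 ≤ f s
  sum_one : ∑ s, f s = 1

/-- The point distribution at `s`. -/
noncomputable def FDist.point {S : Type*} [Fintype S] (s : S) : FDist S where
  f := fun u => if u = s then 1 else 0
  nonneg := by intro u; show 0 ≤ (if u = s then (1:ℝ) else 0); split <;> norm_num
  sum_one := by simp

/-- The lifting `R†` of a relation to distributions: the smallest relation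
relating point distributions of related states and closed under convex
combinations. -/
inductive Lift {S T : Type*} [Fintype S] [Fintype T] (R : S → T → Prop) :
    FDist S → FDist T → Prop
  | point {s : S} {t : T} :
      R s t → Lift R (FDist.point s) (FDist.point t)
  | convex (I : Finset ℕ) (p : ℕ → ℝ)
      (hp : ∀ i ∈ I, 0 ≤ p i) (hsum : ∑ i ∈ I, p i = 1)
      (Δs : ℕ → FDist S) (Θs : ℕ → FDist T)
      (h : ∀ i ∈ I, Lift R (Δs i) (Θs i))
      (Δ : FDist S) (Θ : FDist T)
      (hΔ : Δ.f = ∑ i ∈ I, p i • (Δs i).f)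
      (hΘ : Θ.f = ∑ i ∈ I, p i • (Θs i).f) :
      Lift R Δ Θ
/-- A probabilistic labelled transition system over a finite set of states. -/
structure PLTS (S : Type*) [Fintype S] (Act : Type*) where
  trans : S → Act → FDist S → Prop

/-- The derivatives of `s` under action `a`: `der(s,a) = {Δ | s −a→ Δ}`. -/
def der {S : Type*} [Fintype S] {Act : Type*} (L : PLTS S Act) (s : S) (a : Act) :
    Set (FDist S) :=
  { Δ | L.trans s a Δ }

/-- `R` is a probabilistic bisimulation if, whenever `s R t`, each transition
of either state is matched by a transition of the other, with the resulting
distributions related by the lifted relation `R†`. -/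
def IsBisimulation {S : Type*} [Fintype S] {Act : Type*} (L : PLTS S Act)
    (R : S → S → Prop) : Prop :=
  ∀ s t, R s t →
    (∀ a Δ, L.trans s a Δ → ∃ Θ, L.trans t a Θ ∧ Lift R Δ Θ) ∧
    (∀ a Θ, L.trans t a Θ → ∃ Δ, L.trans s a Δ ∧ Lift R Δ Θ)

/-- Probabilistic bisimilarity `∼`: the largest probabilistic bisimulation. -/
def Bisim {S : Type*} [Fintype S] {Act : Type*} (L : PLTS S Act) (s t : S) : Prop :=
  ∃ R, IsBisimulation L R ∧ R s t

/-- A 1-bounded pseudometric on `S`: a function `m : S × S → [0,1]` with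
`m s s = 0`, symmetry and the triangle inequality. -/
structure BPM (S : Type*) where
  d : S → S → ℝ
  nonneg : ∀ s t, 0 ≤ d s t
  le_one : ∀ s t, d s t ≤ 1
  refl : ∀ s, d s s = 0
  symm : ∀ s t, d s t = d t s
  triangle : ∀ s t u, d s t ≤ d s u + d u t

/-- The order on 1-bounded pseudometrics: `m₁ ⪯ m₂` iff `m₁ s t ≥ m₂ s t`
for all `s, t` (reversed pointwise order). -/
instance {S : Type*} : PartialOrder (BPM S) where
  le m₁ m₂ := ∀ s t, m₂.d s t ≤ m₁.d s t
  le_refl m s t := le_refl _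
  le_trans m₁ m₂ m₃ h₁ h₂ s t := le_trans (h₂ s t) (h₁ s t)
  le_antisymm m₁ m₂ h₁ h₂ := by
    cases m₁; cases m₂
    simp only [BPM.mk.injEq]
    funext s t
    exact le_antisymm (h₂ s t) (h₁ s t)

/-- The Kantorovich lifting `m̂` of a 1-bounded pseudometric `m` on the finite
set `S`, as the optimal value of the linear program:
maximise `∑ s, (Δ(s) − Θ(s))·x s` subject to `x s − x t ≤ m s t` and
`0 ≤ x s ≤ 1`. -/
noncomputable def kant {S : Type*} [Fintype S] (m : S → S → ℝ)
    (Δ Θ : FDist S) : ℝ :=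
  sSup { c | ∃ x : S → ℝ,
    (∀ s t, x s - x t ≤ m s t) ∧
    (∀ s, 0 ≤ x s ∧ x s ≤ 1) ∧
    c = ∑ s, (Δ.f s - Θ.f s) * x s }

/-- Supremum of a set of reals, with `sup ∅ = 0`. -/
noncomputable def hsup (A : Set ℝ) : ℝ := if A = ∅ then 0 else sSup A

/-- Infimum of a set of reals, with `inf ∅ = 1`. -/
noncomputable def hinf (A : Set ℝ) : ℝ := if A = ∅ then 1 else sInf A

/-- The Hausdorff distance between `X, Y ⊆ Z` induced by a distance `d` on
`Z`: `H_d(X,Y) = max{ sup_{x∈X} inf_{y∈Y} d x y, sup_{y∈Y} inf_{x∈X} d y x }`,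
with `inf ∅ = 1` and `sup ∅ = 0`. -/
noncomputable def hausdorff {Z : Type*} (d : Z → Z → ℝ) (X Y : Set Z) : ℝ :=
  max (hsup { v | ∃ x ∈ X, v = hinf { w | ∃ y ∈ Y, w = d x y } })
      (hsup { v | ∃ y ∈ Y, v = hinf { w | ∃ x ∈ X, w = d y x } })

/-- The function `F` on 1-bounded pseudometrics (given here by its value):
`F(m)(s,t) = sup_{a ∈ Act} H_{m̂}(der(s,a), der(t,a))`. -/
noncomputable def Fval {S : Type*} [Fintype S] {Act : Type*} (L : PLTS S Act)
    (m : S → S → ℝ) (s t : S) : ℝ :=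
  hsup { v | ∃ a : Act, v = hausdorff (kant m) (der L s a) (der L t a) }

/-- `m` is a state-metric if for all `ε ∈ [0,1)`, `m s t ≤ ε` implies that
every transition `s −a→ Δ` is matched by some `t −a→ Δ'` with
`m̂(Δ,Δ') ≤ ε`. -/
def StateMetric {S : Type*} [Fintype S] {Act : Type*} (L : PLTS S Act)
    (m : BPM S) : Prop :=
  ∀ ε : ℝ, 0 ≤ ε → ε < 1 → ∀ s t, m.d s t ≤ ε →
    ∀ a Δ, L.trans s a Δ → ∃ Δ', L.trans t a Δ' ∧ kant m.d Δ Δ' ≤ ε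


section BisimAux

open Finset Relation

variable {S : Type*} [Fintype S] {Act : Type*}

private lemma point_sum (s₀ t₀ : S) (x : S → ℝ) :
    ∑ s, ((FDist.point s₀).f s - (FDist.point t₀).f s) * x s = x s₀ - x t₀ := by
  simp [FDist.point, sub_mul, Finset.sum_sub_distrib, Finset.sum_ite_eq']

private lemma lift_sum_le {R : S → S → Prop} {Δ Θ : FDist S} (h : Lift R Δ Θ)
    (x : S → ℝ) (hx : ∀ u v, R u v → x u - x v ≤ 0) :
    ∑ s, (Δ.f s - Θ.f s) * x s ≤ 0 := by
  induction h with
  | @point s₀ t₀ hst =>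
      rw [point_sum]; exact hx _ _ hst
  | convex I p hp hsum Δs Θs h Δ Θ hΔ hΘ ih =>
      rw [hΔ, hΘ]
      simp only [Finset.sum_apply, Pi.smul_apply, smul_eq_mul]
      have key : ∀ s, (∑ i ∈ I, p i * (Δs i).f s - ∑ i ∈ I, p i * (Θs i).f s) * x s
          = ∑ i ∈ I, p i * (((Δs i).f s - (Θs i).f s) * x s) := by
        intro s
        rw [← Finset.sum_sub_distrib, Finset.sum_mul]
        exact Finset.sum_congr rfl fun i _ => by ring
      calc ∑ s, (∑ i ∈ I, p i * (Δs i).f s - ∑ i ∈ I, p i * (Θs i).f s) * x s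
          = ∑ i ∈ I, p i * ∑ s, ((Δs i).f s - (Θs i).f s) * x s := by
            simp_rw [key, Finset.mul_sum]; exact Finset.sum_comm
        _ ≤ 0 := Finset.sum_nonpos fun i hi =>
            mul_nonpos_iff.mpr (Or.inl ⟨hp i hi, ih i hi⟩)

/-- `Gle R Δ Θ`: for every function monotone along `EqvGen R`,
the signed sum is nonpositive. -/
private def Gle (R : S → S → Prop) (Δ Θ : FDist S) : Prop :=
  ∀ x : S → ℝ, (∀ p q, Relation.EqvGen R p q → x p - x q ≤ 0) →
    ∑ s, (Δ.f s - Θ.f s) * x s ≤ 0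

private lemma Gle_refl (R : S → S → Prop) (Δ : FDist S) : Gle R Δ Δ := by
  intro x _; simp

private lemma Gle_symm {R : S → S → Prop} {Δ Θ : FDist S} (h : Gle R Δ Θ) :
    Gle R Θ Δ := by
  intro x hx
  have h2 := h (fun s => -x s) (fun p q hpq => by
    have := hx q p (Relation.EqvGen.symm _ _ hpq); simp; linarith)
  have : ∑ s, (Δ.f s - Θ.f s) * (-x s) = ∑ s, (Θ.f s - Δ.f s) * x s :=
    Finset.sum_congr rfl fun s _ => by ring
  linarith [this ▸ h2]

private lemma Gle_trans {R : S → S → Prop} {Δ Θ Ξ : FDist S}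
    (h1 : Gle R Δ Θ) (h2 : Gle R Θ Ξ) : Gle R Δ Ξ := by
  intro x hx
  have e : ∑ s, (Δ.f s - Ξ.f s) * x s
      = ∑ s, (Δ.f s - Θ.f s) * x s + ∑ s, (Θ.f s - Ξ.f s) * x s := by
    rw [← Finset.sum_add_distrib]
    exact Finset.sum_congr rfl fun s _ => by ring
  rw [e]; linarith [h1 x hx, h2 x hx]

private lemma lift_Gle {R : S → S → Prop} {Δ Θ : FDist S} (h : Lift R Δ Θ) :
    Gle R Δ Θ :=
  fun x hx => lift_sum_le h x (fun u v r => hx u v (Relation.EqvGen.rel u v r))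

private lemma eqv_match (L : PLTS S Act) {R : S → S → Prop}
    (hR : IsBisimulation L R) {u v : S} (h : Relation.EqvGen R u v) :
    (∀ a Δ, L.trans u a Δ → ∃ Θ, L.trans v a Θ ∧ Gle R Δ Θ) ∧
    (∀ a Θ, L.trans v a Θ → ∃ Δ, L.trans u a Δ ∧ Gle R Θ Δ) := by
  induction h with
  | rel p q hpq =>
      constructor
      · intro a Δ htr
        obtain ⟨Θ, hΘ, hl⟩ := (hR p q hpq).1 a Δ htr
        exact ⟨Θ, hΘ, lift_Gle hl⟩
      · intro a Θ htr
        obtain ⟨Δ, hΔ, hl⟩ := (hR p q hpq).2 a Θ htr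
        exact ⟨Δ, hΔ, Gle_symm (lift_Gle hl)⟩
  | refl p =>
      exact ⟨fun a Δ htr => ⟨Δ, htr, Gle_refl R Δ⟩,
             fun a Θ htr => ⟨Θ, htr, Gle_refl R Θ⟩⟩
  | symm p q _ ih => exact ⟨ih.2, ih.1⟩
  | trans p q r _ _ ih1 ih2 =>
      constructor
      · intro a Δ htr
        obtain ⟨Θ, hΘ, g1⟩ := ih1.1 a Δ htr
        obtain ⟨Ξ, hΞ, g2⟩ := ih2.1 a Θ hΘ
        exact ⟨Ξ, hΞ, Gle_trans g1 g2⟩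
      · intro a Θ htr
        obtain ⟨Ξ, hΞ, g1⟩ := ih2.2 a Θ htr
        obtain ⟨Δ, hΔ, g2⟩ := ih1.2 a Ξ hΞ
        exact ⟨Δ, hΔ, Gle_trans g1 g2⟩

/-- The metric that is `0` on `EqvGen R` and `1` elsewhere. -/
private noncomputable def eqvMetric (R : S → S → Prop) : BPM S where
  d u v := if Relation.EqvGen R u v then 0 else 1
  nonneg u v := by split <;> norm_num
  le_one u v := by split <;> norm_num
  refl u := if_pos (Relation.EqvGen.refl u)
  symm u v := by
    by_cases h : Relation.EqvGen R u v
    · rw [if_pos h, if_pos (Relation.EqvGen.symm _ _ h)]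
    · rw [if_neg h, if_neg (fun h' => h (Relation.EqvGen.symm _ _ h'))]
  triangle u v w := by
    by_cases h1 : Relation.EqvGen R u w
    · by_cases h2 : Relation.EqvGen R w v
      · rw [if_pos h1, if_pos h2, if_pos (Relation.EqvGen.trans _ _ _ h1 h2)]; norm_num
      · rw [if_pos h1, if_neg h2]; split <;> norm_num
    · rw [if_neg h1]
      have : (if Relation.EqvGen R u v then (0:ℝ) else 1) ≤ 1 := by split <;> norm_num
      have h2 : (if Relation.EqvGen R w v then (0:ℝ) else 1) ≥ 0 := by split <;> norm_num
      linarith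

private lemma eqvMetric_stateMetric (L : PLTS S Act) {R : S → S → Prop}
    (hR : IsBisimulation L R) : StateMetric L (eqvMetric R) := by
  intro ε hε0 hε1 u v hd a Δ htr
  have huv : Relation.EqvGen R u v := by
    by_contra h
    rw [show (eqvMetric R).d u v = if Relation.EqvGen R u v then 0 else 1 from rfl,
      if_neg h] at hd
    linarith
  obtain ⟨Θ, hΘ, hg⟩ := (eqv_match L hR huv).1 a Δ htr
  refine ⟨Θ, hΘ, le_trans (Real.sSup_le ?_ le_rfl) hε0⟩
  rintro c ⟨x, h1, h2, rfl⟩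
  refine hg x fun p q hpq => ?_
  have := h1 p q
  rw [show (eqvMetric R).d p q = if Relation.EqvGen R p q then 0 else 1 from rfl,
    if_pos hpq] at this
  exact this

/- ### Backward direction: from `mmax s t = 0` to bisimilarity -/

private lemma kant_bddAbove (m : S → S → ℝ) (Δ Θ : FDist S) :
    BddAbove { c | ∃ x : S → ℝ,
      (∀ s t, x s - x t ≤ m s t) ∧ (∀ s, 0 ≤ x s ∧ x s ≤ 1) ∧
      c = ∑ s, (Δ.f s - Θ.f s) * x s } := by
  refine ⟨1, ?_⟩
  rintro c ⟨x, _, h2, rfl⟩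
  calc ∑ s, (Δ.f s - Θ.f s) * x s ≤ ∑ s, Δ.f s := by
        refine Finset.sum_le_sum fun s _ => ?_
        have h0 := (h2 s).1
        have h1 := (h2 s).2
        have hΔ := Δ.nonneg s
        have hΘ := Θ.nonneg s
        nlinarith
    _ = 1 := Δ.sum_one

/-- Class mass equality from vanishing Kantorovich distance. -/
private lemma kernel_mass_eq (m : BPM S) {Δ Θ : FDist S}
    (hk : kant m.d Δ Θ ≤ 0) (u : S) :
    ∑ w ∈ Finset.univ.filter (fun w => m.d u w = 0), Δ.f w
      = ∑ w ∈ Finset.univ.filter (fun w => m.d u w = 0), Θ.f w := by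
  classical
  set C : Finset S := Finset.univ.filter (fun w => m.d u w = 0) with hC
  have huC : u ∈ C := by simp [hC, m.refl]
  -- positive lower bound on nonzero distances
  set P : Finset (S × S) := Finset.univ.filter (fun p => 0 < m.d p.1 p.2) with hP
  set δ : ℝ := if h : P.Nonempty then P.inf' h (fun p => m.d p.1 p.2) else 1 with hδ
  have hδpos : 0 < δ := by
    rw [hδ]; split
    · rename_i h
      rw [Finset.lt_inf'_iff]
      intro p hp
      simpa [hP] using (Finset.mem_filter.mp hp).2
    · norm_num
  have hδ1 : δ ≤ 1 := by
    rw [hδ]; split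
    · rename_i h
      obtain ⟨p, hp⟩ := h
      exact le_trans (Finset.inf'_le _ hp) (m.le_one p.1 p.2)
    · norm_num
  -- δ ≤ every positive distance
  have hδle : ∀ p q : S, 0 < m.d p q → δ ≤ m.d p q := by
    intro p q h
    have hpq : (p, q) ∈ P := by simp [hP, h]
    rw [hδ, dif_pos ⟨(p,q), hpq⟩]
    exact Finset.inf'_le _ hpq
  have hCne : C.Nonempty := ⟨u, huC⟩
  set g : S → ℝ := fun w => C.inf' hCne (fun c => m.d w c) with hg
  have hg0 : ∀ w, 0 ≤ g w := fun w =>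
    Finset.le_inf' hCne _ (fun c _ => m.nonneg w c)
  have hgC : ∀ w ∈ C, g w = 0 := by
    intro w hw
    refine le_antisymm ?_ (hg0 w)
    calc g w ≤ m.d w w := Finset.inf'_le _ hw
      _ = 0 := m.refl w
  have hgpos : ∀ w, w ∉ C → δ ≤ g w := by
    intro w hw
    refine Finset.le_inf' hCne _ fun c hc => ?_
    have hc0 : m.d u c = 0 := by simpa [hC] using hc
    have : 0 < m.d w c := by
      rcases lt_or_eq_of_le (m.nonneg w c) with h | h
      · exact h
      · exfalso
        apply hw
        have : m.d u w ≤ m.d u c + m.d c w := m.triangle u w c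
        rw [hc0, m.symm c w, ← h] at this
        simp only [hC, Finset.mem_filter, Finset.mem_univ, true_and]
        exact le_antisymm (by linarith) (m.nonneg u w)
    exact hδle w c this
  have hgLip : ∀ p q : S, g p ≤ m.d p q + g q := by
    intro p q
    obtain ⟨c, hc, hcg⟩ := Finset.exists_mem_eq_inf' hCne (fun c => m.d q c)
    calc g p ≤ m.d p c := Finset.inf'_le _ hc
      _ ≤ m.d p q + m.d q c := m.triangle p c q
      _ = m.d p q + g q := by rw [← hcg]
  set x : S → ℝ := fun w => max 0 (δ - g w) with hx
  have hxval : ∀ w, x w = if w ∈ C then δ else 0 := by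
    intro w
    by_cases hw : w ∈ C
    · simp [hx, hgC w hw, if_pos hw, le_of_lt hδpos]
    · have := hgpos w hw
      simp [hx, if_neg hw]
      linarith
  have hxfeas : ∀ p q, x p - x q ≤ m.d p q := by
    intro p q
    by_cases hp : δ - g p ≤ 0
    · have : x p = 0 := by simp [hx]; linarith
      rw [this]
      have := le_max_left 0 (δ - g q)
      have := m.nonneg p q
      simp only [hx] at *
      linarith
    · have hxp : x p = δ - g p := by simp [hx]; linarith
      have hxq : δ - g q ≤ x q := le_max_right _ _
      have := hgLip q p
      rw [hxp]
      have := m.symm q p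
      linarith
  have hxbdd : ∀ w, 0 ≤ x w ∧ x w ≤ 1 := by
    intro w
    refine ⟨le_max_left _ _, ?_⟩
    have := hg0 w
    have : δ - g w ≤ δ := by linarith
    simp only [hx, max_le_iff]
    constructor <;> linarith
  -- the opposite function
  set y : S → ℝ := fun w => δ - x w with hy
  have hyfeas : ∀ p q, y p - y q ≤ m.d p q := by
    intro p q
    have := hxfeas q p
    have := m.symm q p
    simp only [hy]
    linarith
  have hybdd : ∀ w, 0 ≤ y w ∧ y w ≤ 1 := by
    intro w
    have h1 := (hxbdd w).1
    have h2 : x w ≤ δ := by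
      rw [hxval w]; split
      · exact le_refl δ
      · exact le_of_lt hδpos
    constructor
    · simp only [hy]; linarith
    · simp only [hy]; linarith
  have hsum1 : ∑ s, (Δ.f s - Θ.f s) = 0 := by
    rw [Finset.sum_sub_distrib, Δ.sum_one, Θ.sum_one]; ring
  have hxsum : ∑ s, (Δ.f s - Θ.f s) * x s
      = δ * (∑ w ∈ C, Δ.f w - ∑ w ∈ C, Θ.f w) := by
    have : ∀ s, (Δ.f s - Θ.f s) * x s
        = if s ∈ C then (Δ.f s - Θ.f s) * δ else 0 := by
      intro s; rw [hxval s]; split <;> simp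
    simp_rw [this]
    rw [Finset.sum_ite_mem, Finset.univ_inter, ← Finset.sum_sub_distrib]
    rw [Finset.mul_sum]
    exact Finset.sum_congr rfl fun s _ => by ring
  have hysum : ∑ s, (Δ.f s - Θ.f s) * y s
      = - (δ * (∑ w ∈ C, Δ.f w - ∑ w ∈ C, Θ.f w)) := by
    have e1 : ∑ s, (Δ.f s - Θ.f s) * y s
        = δ * ∑ s, (Δ.f s - Θ.f s) - ∑ s, (Δ.f s - Θ.f s) * x s := by
      rw [Finset.mul_sum, ← Finset.sum_sub_distrib]
      exact Finset.sum_congr rfl fun s _ => by simp only [hy]; ring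
    rw [e1, hsum1, hxsum]; ring
  have hmemx : ∑ s, (Δ.f s - Θ.f s) * x s ≤ kant m.d Δ Θ :=
    le_csSup (kant_bddAbove m.d Δ Θ) ⟨x, hxfeas, hxbdd, rfl⟩
  have hmemy : ∑ s, (Δ.f s - Θ.f s) * y s ≤ kant m.d Δ Θ :=
    le_csSup (kant_bddAbove m.d Δ Θ) ⟨y, hyfeas, hybdd, rfl⟩
  rw [hxsum] at hmemx
  rw [hysum] at hmemy
  have h1 : δ * (∑ w ∈ C, Δ.f w - ∑ w ∈ C, Θ.f w) ≤ 0 := le_trans hmemx hk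
  have h2 : -(δ * (∑ w ∈ C, Δ.f w - ∑ w ∈ C, Θ.f w)) ≤ 0 := le_trans hmemy hk
  nlinarith

/-- Construct the lifting from equal class masses. -/
private lemma lift_of_mass {R : S → S → Prop} (hRrefl : ∀ u, R u u)
    (hRsymm : ∀ u v, R u v → R v u) (hRtrans : ∀ u v w, R u v → R v w → R u w)
    {Δ Θ : FDist S}
    (h : ∀ u : S, ∑ w ∈ Finset.univ.filter (fun w => R u w), Δ.f w
      = ∑ w ∈ Finset.univ.filter (fun w => R u w), Θ.f w) :
    Lift R Δ Θ := by
  classical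
  set W : S → ℝ := fun u => ∑ w ∈ Finset.univ.filter (fun w => R u w), Δ.f w with hW
  have hWΘ : ∀ u, W u = ∑ w ∈ Finset.univ.filter (fun w => R u w), Θ.f w := fun u => h u
  have hclass : ∀ u v, R u v →
      Finset.univ.filter (fun w => R u w) = Finset.univ.filter (fun w => R v w) := by
    intro u v huv
    ext w
    simp only [Finset.mem_filter, Finset.mem_univ, true_and]
    exact ⟨fun h => hRtrans v u w (hRsymm u v huv) h, fun h => hRtrans u v w huv h⟩
  have hWle : ∀ u, Δ.f u ≤ W u := by
    intro u
    refine Finset.single_le_sum (fun w _ => Δ.nonneg w) ?_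
    exact Finset.mem_filter.mpr ⟨Finset.mem_univ u, hRrefl u⟩
  have hWleΘ : ∀ u, Θ.f u ≤ W u := by
    intro u
    rw [hWΘ u]
    refine Finset.single_le_sum (fun w _ => Θ.nonneg w) ?_
    exact Finset.mem_filter.mpr ⟨Finset.mem_univ u, hRrefl u⟩
  have hW0 : ∀ u, 0 ≤ W u := fun u =>
    Finset.sum_nonneg fun w _ => Δ.nonneg w
  set wt : S × S → ℝ := fun q =>
    if R q.1 q.2 ∧ 0 < W q.1 then Δ.f q.1 * Θ.f q.2 / W q.1 else 0 with hwt
  have hwt0 : ∀ q, 0 ≤ wt q := by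
    intro q
    simp only [hwt]
    split
    · rename_i hq
      exact div_nonneg (mul_nonneg (Δ.nonneg _) (Θ.nonneg _)) (le_of_lt hq.2)
    · exact le_refl (0:ℝ)
  have hrow : ∀ u, ∑ v, wt (u, v) = Δ.f u := by
    intro u
    by_cases hWu : 0 < W u
    · have e1 : ∀ v, wt (u, v) = if R u v then Δ.f u / W u * Θ.f v else 0 := by
        intro v; simp only [hwt]
        by_cases hv : R u v
        · rw [if_pos ⟨hv, hWu⟩, if_pos hv]; ring
        · rw [if_neg (fun hc => hv hc.1), if_neg hv]
      simp_rw [e1]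
      rw [← Finset.sum_filter, ← Finset.mul_sum, ← hWΘ u]
      field_simp
    · have hWu0 : W u = 0 := le_antisymm (not_lt.mp hWu) (hW0 u)
      have hΔ0 : Δ.f u = 0 := le_antisymm (hWu0 ▸ hWle u) (Δ.nonneg u)
      have e1 : ∀ v, wt (u, v) = 0 := by
        intro v; simp only [hwt]
        exact if_neg (fun hc => hWu hc.2)
      simp [e1, hΔ0]
  have hcol : ∀ v, ∑ u, wt (u, v) = Θ.f v := by
    intro v
    have hterm : ∀ u, wt (u, v) = if R v u then Δ.f u * (Θ.f v / W v) else 0 := by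
      intro u
      simp only [hwt]
      by_cases hu : R u v
      · have hWuv : W u = W v := by
          simp only [hW]; rw [hclass u v hu]
        by_cases hWv : 0 < W v
        · rw [if_pos ⟨hu, hWuv ▸ hWv⟩, if_pos (hRsymm u v hu), hWuv]; ring
        · have hWv0 : W v = 0 := le_antisymm (not_lt.mp hWv) (hW0 v)
          rw [if_neg (fun hc => hWv (hWuv ▸ hc.2)), if_pos (hRsymm u v hu), hWv0]
          simp
      · rw [if_neg (fun hc => hu hc.1), if_neg (fun hc => hu (hRsymm v u hc))]
    simp_rw [hterm]
    rw [← Finset.sum_filter, ← Finset.sum_mul]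
    have hWv' : ∑ w ∈ Finset.univ.filter (fun w => R v w), Δ.f w = W v := by rw [hW]
    rw [hWv']
    by_cases hWv : 0 < W v
    · rw [mul_comm, div_mul_cancel₀ _ (ne_of_gt hWv)]
    · have hWv0 : W v = 0 := le_antisymm (not_lt.mp hWv) (hW0 v)
      have hΘ0 : Θ.f v = 0 := le_antisymm (hWv0 ▸ hWleΘ v) (Θ.nonneg v)
      rw [hWv0, hΘ0]
      simp
  have htot : ∑ q : S × S, wt q = 1 := by
    rw [Fintype.sum_prod_type]
    simp_rw [hrow]
    exact Δ.sum_one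
  set N := Fintype.card (S × S) with hN
  set e : S × S ≃ Fin N := Fintype.equivFin (S × S) with he
  set snd' : S × S → S := fun q => if R q.1 q.2 then q.2 else q.1 with hsnd
  refine Lift.convex (Finset.range N)
    (fun i => if h : i < N then wt (e.symm ⟨i, h⟩) else 0)
    (fun i _ => by split <;> first | exact hwt0 _ | exact le_refl (0:ℝ))
    ?_
    (fun i => if h : i < N then FDist.point (e.symm ⟨i, h⟩).1 else Δ)
    (fun i => if h : i < N then FDist.point (snd' (e.symm ⟨i, h⟩)) else Θ)
    ?_ Δ Θ ?_ ?_
  · rw [Finset.sum_range]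
    have e2 : ∀ i : Fin N, (if h : (i : ℕ) < N then wt (e.symm ⟨i, h⟩) else 0)
        = wt (e.symm i) := by
      intro i; rw [dif_pos i.isLt]
    simp_rw [e2]
    rw [Equiv.sum_comp e.symm wt]
    exact htot
  · intro i hi
    have hi' : i < N := Finset.mem_range.mp hi
    rw [dif_pos hi', dif_pos hi']
    by_cases hq : R (e.symm ⟨i, hi'⟩).1 (e.symm ⟨i, hi'⟩).2
    · simp only [hsnd, if_pos hq]
      exact Lift.point hq
    · simp only [hsnd, if_neg hq]
      exact Lift.point (hRrefl _)
  · funext s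
    rw [Finset.sum_apply]
    have e3 : ∀ i ∈ Finset.range N,
        ((if h : i < N then wt (e.symm ⟨i, h⟩) else 0) •
          (if h : i < N then FDist.point (e.symm ⟨i, h⟩).1 else Δ).f) s
        = (fun i => if h : i < N then
            wt (e.symm ⟨i, h⟩) * (FDist.point (e.symm ⟨i, h⟩).1).f s else 0) i := by
      intro i hi
      have hi' : i < N := Finset.mem_range.mp hi
      rw [dif_pos hi', dif_pos hi']
      dsimp only
      rw [dif_pos hi']
      rfl
    rw [Finset.sum_congr rfl e3, Finset.sum_range]
    have e4 : ∀ i : Fin N, (if h : (i : ℕ) < N then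
        wt (e.symm ⟨i, h⟩) * (FDist.point (e.symm ⟨i, h⟩).1).f s else 0)
        = wt (e.symm i) * (FDist.point (e.symm i).1).f s := by
      intro i; rw [dif_pos i.isLt]
    simp_rw [e4]
    rw [Equiv.sum_comp e.symm (fun q => wt q * (FDist.point q.1).f s)]
    rw [Fintype.sum_prod_type]
    have e5 : ∀ u, ∑ v, wt (u, v) * (FDist.point u).f s
        = (if s = u then ∑ v, wt (u, v) else 0) := by
      intro u
      rw [show (FDist.point u).f s = if s = u then 1 else 0 from rfl]
      split
      · simp
      · simp
    simp_rw [e5, hrow]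
    rw [Finset.sum_ite_eq]
    simp
  · funext s
    rw [Finset.sum_apply]
    have e3 : ∀ i ∈ Finset.range N,
        ((if h : i < N then wt (e.symm ⟨i, h⟩) else 0) •
          (if h : i < N then FDist.point (snd' (e.symm ⟨i, h⟩)) else Θ).f) s
        = (fun i => if h : i < N then
            wt (e.symm ⟨i, h⟩) * (FDist.point (snd' (e.symm ⟨i, h⟩))).f s else 0) i := by
      intro i hi
      have hi' : i < N := Finset.mem_range.mp hi
      rw [dif_pos hi', dif_pos hi']
      dsimp only
      rw [dif_pos hi']
      rfl
    rw [Finset.sum_congr rfl e3, Finset.sum_range]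
    have e4 : ∀ i : Fin N, (if h : (i : ℕ) < N then
        wt (e.symm ⟨i, h⟩) * (FDist.point (snd' (e.symm ⟨i, h⟩))).f s else 0)
        = wt (e.symm i) * (FDist.point (snd' (e.symm i))).f s := by
      intro i; rw [dif_pos i.isLt]
    simp_rw [e4]
    rw [Equiv.sum_comp e.symm (fun q => wt q * (FDist.point (snd' q)).f s)]
    have hq2 : ∀ q : S × S, wt q * (FDist.point (snd' q)).f s
        = wt q * (FDist.point q.2).f s := by
      intro q
      by_cases hq : R q.1 q.2
      · simp only [hsnd, if_pos hq]
      · have hz : wt q = 0 := by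
          simp only [hwt]; exact if_neg (fun hc => hq hc.1)
        rw [hz, zero_mul, zero_mul]
    simp_rw [hq2]
    rw [Fintype.sum_prod_type]
    have e5 : ∀ u, ∑ v, wt (u, v) * (FDist.point v).f s = wt (u, s) := by
      intro u
      have e6 : ∀ v, wt (u, v) * (FDist.point v).f s = if s = v then wt (u, v) else 0 := by
        intro v
        rw [show (FDist.point v).f s = if s = v then 1 else 0 from rfl]
        split
        · rw [mul_one]
        · rw [mul_zero]
      simp_rw [e6]
      rw [Finset.sum_ite_eq]
      simp
    simp_rw [e5]
    exact (hcol s).symm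

/-- `Lift` of a symmetric relation is symmetric. -/
private lemma lift_symm' {R : S → S → Prop} (hsym : ∀ u v, R u v → R v u)
    {Δ Θ : FDist S} (h : Lift R Δ Θ) : Lift R Θ Δ := by
  induction h with
  | point hst => exact Lift.point (hsym _ _ hst)
  | convex I p hp hsum Δs Θs h Δ Θ hΔ hΘ ih =>
      exact Lift.convex I p hp hsum Θs Δs ih Θ Δ hΘ hΔ

end BisimAux

/-- Two states of a finite-state pLTS are probabilistically bisimilar iff
their distance under the greatest state-metric `m_max` is `0`. -/
theorem bisim_iff_mmax_eq_zero {S : Type*} [Fintype S] {Act : Type*}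
    (L : PLTS S Act) (mmax : BPM S)
    (hsm : StateMetric L mmax)
    (hgreatest : ∀ m : BPM S, StateMetric L m → m ≤ mmax)
    (s t : S) :
    Bisim L s t ↔ mmax.d s t = 0 := by
  constructor
  · rintro ⟨R, hR, hst⟩
    have hle := hgreatest _ (eqvMetric_stateMetric L hR)
    have h1 : mmax.d s t ≤ (eqvMetric R).d s t := hle s t
    have h2 : (eqvMetric R).d s t = 0 := if_pos (Relation.EqvGen.rel s t hst)
    exact le_antisymm (h2 ▸ h1) (mmax.nonneg s t)
  · intro h0
    have hsymm : ∀ p q : S, mmax.d p q = 0 → mmax.d q p = 0 := fun p q h => by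
      rw [mmax.symm q p]; exact h
    have htrans : ∀ a b c : S, mmax.d a b = 0 → mmax.d b c = 0 → mmax.d a c = 0 := by
      intro a b c h1 h2
      have ht := mmax.triangle a c b
      exact le_antisymm (by rw [h1, h2] at ht; linarith) (mmax.nonneg a c)
    have key : ∀ p q : S, mmax.d p q = 0 → ∀ a Δ, L.trans p a Δ →
        ∃ Θ, L.trans q a Θ ∧ Lift (fun u v => mmax.d u v = 0) Δ Θ := by
      intro p q hpq a Δ htr
      obtain ⟨Θ, hΘ, hk⟩ := hsm 0 le_rfl one_pos p q (le_of_eq hpq) a Δ htr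
      exact ⟨Θ, hΘ, lift_of_mass (fun u => mmax.refl u) hsymm htrans
        (fun u => kernel_mass_eq mmax hk u)⟩
    refine ⟨fun u v => mmax.d u v = 0, ?_, h0⟩
    intro u v huv
    constructor
    · exact key u v huv
    · intro a Θ htr
      obtain ⟨Δ, hΔ, hl⟩ := key v u (hsymm u v huv) a Θ htr
      exact ⟨Δ, hΔ, lift_symm' hsymm hl⟩
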